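/- Let V : ℝ³ → ℝ be measurable with finite global Kato norm ‖V‖_K. Then for every positive integer k, sup over x₀, x_{k+1} ∈ ℝ³ of ∫_{ℝ^{3k}} [ (∏_{j=1}^k |V(x_j)|) / (∏_{j=0}^k |x_j − x_{j+1}|) ] · ( Σ_{ℓ=0}^k |x_ℓ − x_{ℓ+1}| ) dx₁ ⋯ dx_k ≤ (k+1) ‖V‖_K^k. -/

import Mathlib

open MeasureTheory
open scoped ENNReal NNReal

/-- The chain `x₀, x₁, …, x_k, x_{k+1}` of points: `chain k x0 xk1 y i` equals `x0` for
`i = 0`, `y (i-1)` for `1 ≤ i ≤ k`, and `xk1` for `i ≥ k+1`. -/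
noncomputable def chain {E : Type*} (k : ℕ) (x0 xk1 : E) (y : Fin k → E) : ℕ → E :=
  fun i => if i = 0 then x0 else if h : i - 1 < k then y ⟨i - 1, h⟩ else xk1

namespace Stmt1Aux

abbrev E3 : Type := EuclideanSpace ℝ (Fin 3)

variable (V : E3 → ℝ)

/-- The global Kato norm as an `ℝ≥0∞`-valued quantity. -/
noncomputable def kato : ℝ≥0∞ :=
  ⨆ x : E3, ∫⁻ y : E3, ENNReal.ofReal (|V y| / dist x y)

/-- The weight of a half-open chain `p 0 — p 1 — ⋯ — p n` with potential factors at
`p 1, …, p n` and distance factors on every link. -/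
noncomputable def Wt (n : ℕ) (p : Fin (n + 1) → E3) : ℝ≥0∞ :=
  ∏ i : Fin n,
    ENNReal.ofReal |V (p i.succ)| * ENNReal.ofReal ((dist (p i.castSucc) (p i.succ))⁻¹)

variable {V}

lemma measurable_Wt (hV : Measurable V) (n : ℕ) : Measurable (Wt V n) := by
  unfold Wt
  refine Finset.measurable_prod _ fun i _ => ?_
  exact ((hV.comp (measurable_pi_apply i.succ)).abs.ennreal_ofReal).mul
    (((measurable_pi_apply i.castSucc).dist (measurable_pi_apply i.succ)).inv.ennreal_ofReal)

lemma measurable_cons {n : ℕ} :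
    Measurable (fun z : E3 × (Fin n → E3) => (Fin.cons z.1 z.2 : Fin (n + 1) → E3)) := by
  refine measurable_pi_lambda _ fun i => ?_
  refine Fin.cases ?_ (fun j => ?_) i
  · simpa using measurable_fst
  · simp only [Fin.cons_succ]
    exact (measurable_pi_apply j).comp measurable_snd

lemma single_le (a : E3) :
    (∫⁻ x : E3, ENNReal.ofReal |V x| * ENNReal.ofReal ((dist a x)⁻¹)) ≤ kato V := by
  have : ∀ x : E3, ENNReal.ofReal |V x| * ENNReal.ofReal ((dist a x)⁻¹)
      = ENNReal.ofReal (|V x| / dist a x) := by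
    intro x
    rw [div_eq_mul_inv, ENNReal.ofReal_mul (abs_nonneg _)]
  simp only [this]
  exact le_iSup (fun x : E3 => ∫⁻ y : E3, ENNReal.ofReal (|V y| / dist x y)) a

lemma Wt_cons_cons {n : ℕ} (a x : E3) (v : Fin n → E3) :
    Wt V (n + 1) (Fin.cons a (Fin.cons x v)) =
      (ENNReal.ofReal |V x| * ENNReal.ofReal ((dist a x)⁻¹)) * Wt V n (Fin.cons x v) := by
  unfold Wt
  rw [Fin.prod_univ_succ]
  congr 1

/-- Key half-chain bound: the integral of the half-chain weight anchored at `a` is at most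
`kato V ^ n`, uniformly in `a`. -/
lemma half_le (hV : Measurable V) : ∀ n : ℕ, ∀ a : E3,
    (∫⁻ y : Fin n → E3, Wt V n (Fin.cons a y)) ≤ kato V ^ n := by
  intro n
  induction n with
  | zero =>
    intro a
    have h1 : ∀ y : Fin 0 → E3, Wt V 0 (Fin.cons a y) = 1 := by
      intro y; simp [Wt]
    simp only [h1]
    rw [lintegral_one]
    rw [volume_pi, Measure.pi_univ]
    simp
  | succ n ih =>
    intro a
    have hF : Measurable fun y : Fin (n + 1) → E3 => Wt V (n + 1) (Fin.cons a y) := by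
      exact (measurable_Wt hV (n + 1)).comp (measurable_cons.comp measurable_prodMk_left)
    have key := ((volume_preserving_piFinSuccAbove (fun _ : Fin (n + 1) => E3) 0).symm).lintegral_comp hF
    rw [← key]
    have hsymm : ∀ z : E3 × (Fin n → E3),
        (MeasurableEquiv.piFinSuccAbove (fun _ : Fin (n + 1) => E3) 0).symm z
          = Fin.cons z.1 z.2 := by
      intro z
      rw [MeasurableEquiv.piFinSuccAbove_symm_apply]
      simp [Fin.insertNthEquiv, Fin.insertNth_zero']
    have hmeasG : Measurable fun z : E3 × (Fin n → E3) =>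
        (ENNReal.ofReal |V z.1| * ENNReal.ofReal ((dist a z.1)⁻¹)) *
          Wt V n (Fin.cons z.1 z.2) := by
      refine Measurable.mul ?_ ((measurable_Wt hV n).comp measurable_cons)
      exact ((hV.comp measurable_fst).abs.ennreal_ofReal).mul
        ((measurable_const.dist measurable_fst).inv.ennreal_ofReal)
    calc (∫⁻ z : E3 × (Fin n → E3),
          Wt V (n + 1) (Fin.cons a ((MeasurableEquiv.piFinSuccAbove (fun _ : Fin (n + 1) => E3) 0).symm z)))
        = ∫⁻ z : E3 × (Fin n → E3),
            (ENNReal.ofReal |V z.1| * ENNReal.ofReal ((dist a z.1)⁻¹)) *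
              Wt V n (Fin.cons z.1 z.2) := by
          refine lintegral_congr fun z => ?_
          rw [hsymm z, Wt_cons_cons]
      _ = ∫⁻ x : E3, ∫⁻ v : Fin n → E3,
            (ENNReal.ofReal |V x| * ENNReal.ofReal ((dist a x)⁻¹)) *
              Wt V n (Fin.cons x v) := by
          rw [Measure.volume_eq_prod, lintegral_prod _ hmeasG.aemeasurable]
      _ ≤ ∫⁻ x : E3,
            (ENNReal.ofReal |V x| * ENNReal.ofReal ((dist a x)⁻¹)) * kato V ^ n := by
          refine lintegral_mono fun x => ?_
          rw [lintegral_const_mul _ (show Measurable fun v : Fin n → E3 =>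
            Wt V n (Fin.cons x v) from (measurable_Wt hV n).comp
              (measurable_cons.comp measurable_prodMk_left))]
          exact mul_le_mul_right (ih x) _
      _ = (∫⁻ x : E3, ENNReal.ofReal |V x| * ENNReal.ofReal ((dist a x)⁻¹)) * kato V ^ n := by
          rw [lintegral_mul_const _ (show Measurable fun x : E3 =>
            ENNReal.ofReal |V x| * ENNReal.ofReal ((dist a x)⁻¹) from
              (hV.abs.ennreal_ofReal).mul
                ((measurable_const.dist measurable_id).inv.ennreal_ofReal))]
      _ ≤ kato V * kato V ^ n := mul_le_mul_left (single_le a) _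
      _ = kato V ^ (n + 1) := (pow_succ' _ _).symm

lemma measurable_chain (k j : ℕ) (x0 xk1 : E3) :
    Measurable fun y : Fin k → E3 => chain k x0 xk1 y j := by
  unfold chain
  by_cases h0 : j = 0
  · simp [h0]
  by_cases h1 : j - 1 < k
  · simpa [h0, h1] using measurable_pi_apply (⟨j - 1, h1⟩ : Fin k)
  · simp [h0, h1]

/-- Integral of the chain with the `l`-th link removed (reorganized as a product of two
half-chains) is at most `kato V ^ k`. -/
lemma split_le (hV : Measurable V) (k l : ℕ) (hl : l ≤ k) (x0 xk1 : E3) :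
    (∫⁻ y : Fin k → E3,
      ((∏ j ∈ Finset.range l,
          ENNReal.ofReal |V (chain k x0 xk1 y (j + 1))| *
            ENNReal.ofReal ((dist (chain k x0 xk1 y j) (chain k x0 xk1 y (j + 1)))⁻¹)) *
        ∏ j ∈ Finset.range (k - l),
          ENNReal.ofReal |V (chain k x0 xk1 y (k - j))| *
            ENNReal.ofReal ((dist (chain k x0 xk1 y (k - j)) (chain k x0 xk1 y (k - j + 1)))⁻¹)))
      ≤ kato V ^ k := by
  set m := k - l with hm
  have hk' : l + m = k := by omega
  let σ : Fin l ⊕ Fin m ≃ Fin k :=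
    ((Equiv.refl (Fin l)).sumCongr Fin.revPerm).trans (finSumFinEquiv.trans (finCongr hk'))
  have hσl : ∀ i : Fin l, ((σ (Sum.inl i)) : ℕ) = (i : ℕ) := by
    intro i; simp [σ]
  have hσr : ∀ i : Fin m, ((σ (Sum.inr i)) : ℕ) = k - 1 - (i : ℕ) := by
    intro i
    have hi := i.isLt
    simp [σ, Fin.val_rev]
    omega
  let T : (Fin l → E3) × (Fin m → E3) → (Fin k → E3) := fun z =>
    (MeasurableEquiv.piCongrLeft (fun _ : Fin k => E3) σ)
      ((MeasurableEquiv.sumPiEquivProdPi (fun _ : Fin l ⊕ Fin m => E3)).symm z)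
  have hT : ∀ (u : Fin l → E3) (v : Fin m → E3) (s : Fin l ⊕ Fin m),
      T (u, v) (σ s) = Sum.elim u v s := by
    intro u v s
    show (MeasurableEquiv.piCongrLeft (fun _ : Fin k => E3) σ) _ (σ s) = _
    rw [MeasurableEquiv.coe_piCongrLeft, Equiv.piCongrLeft_apply_apply,
      MeasurableEquiv.coe_sumPiEquivProdPi_symm, Equiv.sumPiEquivProdPi_symm_apply]
    cases s <;> rfl
  have hmp : MeasurePreserving T volume volume :=
    (volume_measurePreserving_piCongrLeft (fun _ => E3) σ).comp
      (volume_measurePreserving_sumPiEquivProdPi_symm (fun _ => E3))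
  -- chain values under T
  have hcl : ∀ (u : Fin l → E3) (v : Fin m → E3) (j : ℕ) (hj : j ≤ l),
      chain k x0 xk1 (T (u, v)) j = (Fin.cons x0 u : Fin (l + 1) → E3) (⟨j, by omega⟩ : Fin (l + 1)) := by
    intro u v j hj
    by_cases h0 : j = 0
    · subst h0
      show x0 = _
      have : (⟨0, by omega⟩ : Fin (l + 1)) = 0 := rfl
      rw [this, Fin.cons_zero]
    · have h1 : j - 1 < k := by omega
      have hc : chain k x0 xk1 (T (u, v)) j = T (u, v) ⟨j - 1, h1⟩ := by
        simp [chain, h0, h1]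
      have hσeq : σ (Sum.inl ⟨j - 1, by omega⟩) = ⟨j - 1, h1⟩ := by
        apply Fin.ext; rw [hσl]
      rw [hc, ← hσeq, hT]
      have hsucc : (⟨j, by omega⟩ : Fin (l + 1)) = Fin.succ (⟨j - 1, by omega⟩ : Fin l) := by
        apply Fin.ext; simp; omega
      rw [hsucc, Fin.cons_succ]
      rfl
  have hcr : ∀ (u : Fin l → E3) (v : Fin m → E3) (j : ℕ) (hj1 : l + 1 ≤ j) (hj2 : j ≤ k + 1),
      chain k x0 xk1 (T (u, v)) j = (Fin.cons xk1 v : Fin (m + 1) → E3) (⟨k + 1 - j, by omega⟩ : Fin (m + 1)) := by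
    intro u v j hj1 hj2
    by_cases hk1 : j = k + 1
    · subst hk1
      have h0 : ¬ (k + 1 = 0) := by omega
      have h1 : ¬ (k + 1 - 1 < k) := by omega
      have hc : chain k x0 xk1 (T (u, v)) (k + 1) = xk1 := by
        simp [chain, h0, h1]
      rw [hc]
      have : (⟨k + 1 - (k + 1), by omega⟩ : Fin (m + 1)) = 0 := by
        apply Fin.ext; simp
      rw [this, Fin.cons_zero]
    · have h0 : ¬ (j = 0) := by omega
      have h1 : j - 1 < k := by omega
      have hc : chain k x0 xk1 (T (u, v)) j = T (u, v) ⟨j - 1, h1⟩ := by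
        simp [chain, h0, h1]
      have hkj : k - j < m := by omega
      have hσeq : σ (Sum.inr ⟨k - j, hkj⟩) = ⟨j - 1, h1⟩ := by
        apply Fin.ext; rw [hσr]; simp; omega
      rw [hc, ← hσeq, hT]
      have hsucc : (⟨k + 1 - j, by omega⟩ : Fin (m + 1)) = Fin.succ (⟨k - j, hkj⟩ : Fin m) := by
        apply Fin.ext; simp; omega
      rw [hsucc, Fin.cons_succ]
      rfl
  -- measurability of the integrand
  have hA : Measurable fun y : Fin k → E3 =>
      ((∏ j ∈ Finset.range l,
          ENNReal.ofReal |V (chain k x0 xk1 y (j + 1))| *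
            ENNReal.ofReal ((dist (chain k x0 xk1 y j) (chain k x0 xk1 y (j + 1)))⁻¹)) *
        ∏ j ∈ Finset.range (k - l),
          ENNReal.ofReal |V (chain k x0 xk1 y (k - j))| *
            ENNReal.ofReal ((dist (chain k x0 xk1 y (k - j)) (chain k x0 xk1 y (k - j + 1)))⁻¹)) := by
    refine Measurable.mul ?_ ?_ <;>
      refine Finset.measurable_prod _ fun j _ => Measurable.fun_mul ?_ ?_
    · exact (hV.comp (measurable_chain k (j + 1) x0 xk1)).abs.ennreal_ofReal
    · exact (((measurable_chain k j x0 xk1).dist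
        (measurable_chain k (j + 1) x0 xk1)).inv).ennreal_ofReal
    · exact (hV.comp (measurable_chain k (k - j) x0 xk1)).abs.ennreal_ofReal
    · exact (((measurable_chain k (k - j) x0 xk1).dist
        (measurable_chain k (k - j + 1) x0 xk1)).inv).ennreal_ofReal
  rw [← hmp.lintegral_comp hA]
  -- pointwise factorization
  have hpoint : ∀ z : (Fin l → E3) × (Fin m → E3),
      ((∏ j ∈ Finset.range l,
          ENNReal.ofReal |V (chain k x0 xk1 (T z) (j + 1))| *
            ENNReal.ofReal ((dist (chain k x0 xk1 (T z) j) (chain k x0 xk1 (T z) (j + 1)))⁻¹)) *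
        ∏ j ∈ Finset.range (k - l),
          ENNReal.ofReal |V (chain k x0 xk1 (T z) (k - j))| *
            ENNReal.ofReal ((dist (chain k x0 xk1 (T z) (k - j)) (chain k x0 xk1 (T z) (k - j + 1)))⁻¹))
      = Wt V l (Fin.cons x0 z.1) * Wt V m (Fin.cons xk1 z.2) := by
    rintro ⟨u, v⟩
    congr 1
    · rw [Finset.prod_range fun j =>
        ENNReal.ofReal |V (chain k x0 xk1 (T (u, v)) (j + 1))| *
          ENNReal.ofReal ((dist (chain k x0 xk1 (T (u, v)) j) (chain k x0 xk1 (T (u, v)) (j + 1)))⁻¹)]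
      unfold Wt
      refine Finset.prod_congr rfl fun i _ => ?_
      have e1 : chain k x0 xk1 (T (u, v)) ((i : ℕ) + 1)
          = (Fin.cons x0 u : Fin (l + 1) → E3) i.succ := by
        rw [hcl u v ((i : ℕ) + 1) (by omega)]
        congr 1
      have e2 : chain k x0 xk1 (T (u, v)) (i : ℕ)
          = (Fin.cons x0 u : Fin (l + 1) → E3) i.castSucc := by
        rw [hcl u v (i : ℕ) (by omega)]
        congr 1
      rw [e1, e2]
    · rw [Finset.prod_range fun j =>
        ENNReal.ofReal |V (chain k x0 xk1 (T (u, v)) (k - j))| *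
          ENNReal.ofReal ((dist (chain k x0 xk1 (T (u, v)) (k - j)) (chain k x0 xk1 (T (u, v)) (k - j + 1)))⁻¹)]
      unfold Wt
      refine Finset.prod_congr rfl fun i _ => ?_
      have hi := i.isLt
      have e1 : chain k x0 xk1 (T (u, v)) (k - (i : ℕ))
          = (Fin.cons xk1 v : Fin (m + 1) → E3) i.succ := by
        rw [hcr u v (k - (i : ℕ)) (by omega) (by omega)]
        congr 1
        apply Fin.ext; simp; omega
      have e2 : chain k x0 xk1 (T (u, v)) (k - (i : ℕ) + 1)
          = (Fin.cons xk1 v : Fin (m + 1) → E3) i.castSucc := by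
        rw [hcr u v (k - (i : ℕ) + 1) (by omega) (by omega)]
        congr 1
        apply Fin.ext; simp; omega
      rw [e1, e2, dist_comm]
  calc (∫⁻ z : (Fin l → E3) × (Fin m → E3),
        ((∏ j ∈ Finset.range l,
            ENNReal.ofReal |V (chain k x0 xk1 (T z) (j + 1))| *
              ENNReal.ofReal ((dist (chain k x0 xk1 (T z) j) (chain k x0 xk1 (T z) (j + 1)))⁻¹)) *
          ∏ j ∈ Finset.range (k - l),
            ENNReal.ofReal |V (chain k x0 xk1 (T z) (k - j))| *
              ENNReal.ofReal ((dist (chain k x0 xk1 (T z) (k - j)) (chain k x0 xk1 (T z) (k - j + 1)))⁻¹)))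
      = ∫⁻ z : (Fin l → E3) × (Fin m → E3),
          Wt V l (Fin.cons x0 z.1) * Wt V m (Fin.cons xk1 z.2) := lintegral_congr hpoint
    _ = (∫⁻ u : Fin l → E3, Wt V l (Fin.cons x0 u)) *
          ∫⁻ v : Fin m → E3, Wt V m (Fin.cons xk1 v) := by
        rw [Measure.volume_eq_prod]
        exact lintegral_prod_mul
          (((measurable_Wt hV l).comp (measurable_cons.comp measurable_prodMk_left)).aemeasurable)
          (((measurable_Wt hV m).comp (measurable_cons.comp measurable_prodMk_left)).aemeasurable)
    _ ≤ kato V ^ l * kato V ^ m := mul_le_mul' (half_le hV l x0) (half_le hV m xk1)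
    _ = kato V ^ k := by rw [← pow_add, hk']

lemma prod_Ioc_shift {M : Type*} [CommMonoid M] (f : ℕ → M) (l : ℕ) :
    (∏ j ∈ Finset.Ioc 0 l, f j) = ∏ j ∈ Finset.range l, f (j + 1) := by
  refine Finset.prod_bij' (fun a _ => a - 1) (fun b _ => b + 1) ?_ ?_ ?_ ?_ ?_
  · intro a ha
    simp only [Finset.mem_Ioc] at ha
    simp only [Finset.mem_range]
    omega
  · intro b hb
    simp only [Finset.mem_range] at hb
    simp only [Finset.mem_Ioc]
    omega
  · intro a ha
    simp only [Finset.mem_Ioc] at ha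
    omega
  · intro b hb
    omega
  · intro a ha
    simp only [Finset.mem_Ioc] at ha
    exact congrArg f (by omega)

lemma prod_Ioc_reflect {M : Type*} [CommMonoid M] (f : ℕ → M) (l k : ℕ) (hlk : l ≤ k) :
    (∏ j ∈ Finset.Ioc l k, f j) = ∏ j ∈ Finset.range (k - l), f (k - j) := by
  refine Finset.prod_bij' (fun a _ => k - a) (fun b _ => k - b) ?_ ?_ ?_ ?_ ?_
  · intro a ha
    simp only [Finset.mem_Ioc] at ha
    simp only [Finset.mem_range]
    omega
  · intro b hb
    simp only [Finset.mem_range] at hb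
    simp only [Finset.mem_Ioc]
    omega
  · intro a ha
    simp only [Finset.mem_Ioc] at ha
    omega
  · intro b hb
    simp only [Finset.mem_range] at hb
    omega
  · intro a ha
    simp only [Finset.mem_Ioc] at ha
    exact congrArg f (by omega)

end Stmt1Aux

/-- for a measurable `V : ℝ³ → ℝ` with finite global Kato norm
`‖V‖_K = sup_x ∫ |V(y)|/|x-y| dy`, for every `k ≥ 1` and all `x₀, x_{k+1} ∈ ℝ³`,
`∫_{ℝ^{3k}} (∏_{j=1}^k |V(x_j)| / ∏_{j=0}^k |x_j - x_{j+1}|) Σ_{ℓ=0}^k |x_ℓ - x_{ℓ+1}|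
  dx₁⋯dx_k ≤ (k+1) ‖V‖_K^k`. -/
theorem stmt_1 (V : EuclideanSpace ℝ (Fin 3) → ℝ) (hV : Measurable V)
    (hfin : (⨆ x : EuclideanSpace ℝ (Fin 3),
        ∫⁻ y : EuclideanSpace ℝ (Fin 3), ENNReal.ofReal (|V y| / dist x y)) ≠ ⊤) :
    ∀ k : ℕ, 1 ≤ k → ∀ x0 xk1 : EuclideanSpace ℝ (Fin 3),
      (∫⁻ y : Fin k → EuclideanSpace ℝ (Fin 3),
          ENNReal.ofReal
            (((∏ j ∈ Finset.Icc 1 k, |V (chain k x0 xk1 y j)|) /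
                ∏ j ∈ Finset.range (k + 1),
                  dist (chain k x0 xk1 y j) (chain k x0 xk1 y (j + 1))) *
              ∑ l ∈ Finset.range (k + 1),
                dist (chain k x0 xk1 y l) (chain k x0 xk1 y (l + 1))))
        ≤ (k + 1 : ENNReal) *
            (⨆ x : EuclideanSpace ℝ (Fin 3),
              ∫⁻ y' : EuclideanSpace ℝ (Fin 3), ENNReal.ofReal (|V y'| / dist x y')) ^ k := by
  intro k hk x0 xk1
  have main : (∫⁻ y : Fin k → Stmt1Aux.E3,
      ENNReal.ofReal
        (((∏ j ∈ Finset.Icc 1 k, |V (chain k x0 xk1 y j)|) /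
            ∏ j ∈ Finset.range (k + 1),
              dist (chain k x0 xk1 y j) (chain k x0 xk1 y (j + 1))) *
          ∑ l ∈ Finset.range (k + 1),
            dist (chain k x0 xk1 y l) (chain k x0 xk1 y (l + 1))))
      ≤ (k + 1 : ENNReal) * Stmt1Aux.kato V ^ k := by
    have hAmeas : ∀ l : ℕ, Measurable fun y : Fin k → Stmt1Aux.E3 =>
        ((∏ j ∈ Finset.range l,
            ENNReal.ofReal |V (chain k x0 xk1 y (j + 1))| *
              ENNReal.ofReal ((dist (chain k x0 xk1 y j) (chain k x0 xk1 y (j + 1)))⁻¹)) *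
          ∏ j ∈ Finset.range (k - l),
            ENNReal.ofReal |V (chain k x0 xk1 y (k - j))| *
              ENNReal.ofReal ((dist (chain k x0 xk1 y (k - j)) (chain k x0 xk1 y (k - j + 1)))⁻¹)) := by
      intro l
      refine Measurable.mul ?_ ?_ <;>
        refine Finset.measurable_prod _ fun j _ => Measurable.fun_mul ?_ ?_
      · exact (hV.comp (Stmt1Aux.measurable_chain k (j + 1) x0 xk1)).abs.ennreal_ofReal
      · exact (((Stmt1Aux.measurable_chain k j x0 xk1).dist
          (Stmt1Aux.measurable_chain k (j + 1) x0 xk1)).inv).ennreal_ofReal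
      · exact (hV.comp (Stmt1Aux.measurable_chain k (k - j) x0 xk1)).abs.ennreal_ofReal
      · exact (((Stmt1Aux.measurable_chain k (k - j) x0 xk1).dist
          (Stmt1Aux.measurable_chain k (k - j + 1) x0 xk1)).inv).ennreal_ofReal
    have hpt : ∀ y : Fin k → Stmt1Aux.E3,
        ENNReal.ofReal
          (((∏ j ∈ Finset.Icc 1 k, |V (chain k x0 xk1 y j)|) /
              ∏ j ∈ Finset.range (k + 1),
                dist (chain k x0 xk1 y j) (chain k x0 xk1 y (j + 1))) *
            ∑ l ∈ Finset.range (k + 1),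
              dist (chain k x0 xk1 y l) (chain k x0 xk1 y (l + 1)))
        ≤ ∑ l ∈ Finset.range (k + 1),
            ((∏ j ∈ Finset.range l,
                ENNReal.ofReal |V (chain k x0 xk1 y (j + 1))| *
                  ENNReal.ofReal ((dist (chain k x0 xk1 y j) (chain k x0 xk1 y (j + 1)))⁻¹)) *
              ∏ j ∈ Finset.range (k - l),
                ENNReal.ofReal |V (chain k x0 xk1 y (k - j))| *
                  ENNReal.ofReal ((dist (chain k x0 xk1 y (k - j)) (chain k x0 xk1 y (k - j + 1)))⁻¹)) := by
      intro y
      set c : ℕ → Stmt1Aux.E3 := chain k x0 xk1 y with hc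
      set d : ℕ → ℝ := fun j => dist (c j) (c (j + 1)) with hd
      set P : ℝ := ∏ j ∈ Finset.Icc 1 k, |V (c j)| with hP
      set D : ℝ := ∏ j ∈ Finset.range (k + 1), d j with hD
      have hPnn : 0 ≤ P := Finset.prod_nonneg fun _ _ => abs_nonneg _
      have hDnn : 0 ≤ D := Finset.prod_nonneg fun _ _ => dist_nonneg
      rw [Finset.mul_sum]
      rw [ENNReal.ofReal_sum_of_nonneg
        (fun i _ => mul_nonneg (div_nonneg hPnn hDnn) dist_nonneg)]
      refine Finset.sum_le_sum fun l hl => ?_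
      have hlk : l ≤ k := by
        have := Finset.mem_range.mp hl; omega
      -- reindex the potential product
      have hPsplit : P = (∏ j ∈ Finset.range l, |V (c (j + 1))|) *
          ∏ j ∈ Finset.range (k - l), |V (c (k - j))| := by
        have hIcc : Finset.Icc 1 k = Finset.Ioc 0 k := by
          ext j; simp; omega
        rw [hP, hIcc, ← Finset.prod_Ioc_consecutive (fun j => |V (c j)|) (Nat.zero_le l) hlk,
          Stmt1Aux.prod_Ioc_shift (fun j => |V (c j)|) l,
          Stmt1Aux.prod_Ioc_reflect (fun j => |V (c j)|) l k hlk]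
      -- the distance bound
      have hdiv : d l / D ≤ (∏ j ∈ Finset.range l, (d j)⁻¹) *
          ∏ j ∈ Finset.range (k - l), (d (k - j))⁻¹ := by
        have hdisj : Disjoint (Finset.range l) (Finset.Ioc l k) := by
          refine Finset.disjoint_left.mpr fun j hj1 hj2 => ?_
          simp only [Finset.mem_range] at hj1
          simp only [Finset.mem_Ioc] at hj2
          omega
        have herase : (Finset.range (k + 1)).erase l = Finset.range l ∪ Finset.Ioc l k := by
          ext j; simp; omega
        have hDsplit : D = d l * ((∏ j ∈ Finset.range l, d j) * ∏ j ∈ Finset.Ioc l k, d j) := by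
          rw [hD, ← Finset.mul_prod_erase (Finset.range (k + 1)) d
            (Finset.mem_range.mpr (show l < k + 1 by omega)), herase, Finset.prod_union hdisj]
        have hQnn : 0 ≤ (∏ j ∈ Finset.range l, d j) * ∏ j ∈ Finset.Ioc l k, d j :=
          mul_nonneg (Finset.prod_nonneg fun _ _ => dist_nonneg)
            (Finset.prod_nonneg fun _ _ => dist_nonneg)
        have key : d l / D ≤ ((∏ j ∈ Finset.range l, d j) * ∏ j ∈ Finset.Ioc l k, d j)⁻¹ := by
          by_cases hdl : d l = 0
          · rw [hdl, zero_div]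
            exact inv_nonneg.mpr hQnn
          · rw [hDsplit, div_eq_mul_inv, mul_inv, ← mul_assoc, mul_inv_cancel₀ hdl, one_mul]
        refine key.trans (le_of_eq ?_)
        rw [mul_inv, ← Finset.prod_inv_distrib, ← Finset.prod_inv_distrib,
          Stmt1Aux.prod_Ioc_reflect (fun j => (d j)⁻¹) l k hlk]
      calc ENNReal.ofReal (P / D * d l)
          = ENNReal.ofReal (P * (d l / D)) := by rw [div_mul_eq_mul_div, mul_div_assoc]
        _ ≤ ENNReal.ofReal (P * ((∏ j ∈ Finset.range l, (d j)⁻¹) *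
              ∏ j ∈ Finset.range (k - l), (d (k - j))⁻¹)) :=
            ENNReal.ofReal_le_ofReal (mul_le_mul_of_nonneg_left hdiv hPnn)
        _ = ENNReal.ofReal ((∏ j ∈ Finset.range l, |V (c (j + 1))| * (d j)⁻¹) *
              ∏ j ∈ Finset.range (k - l), |V (c (k - j))| * (d (k - j))⁻¹) := by
            rw [hPsplit, Finset.prod_mul_distrib, Finset.prod_mul_distrib]
            congr 1
            ring
        _ = (∏ j ∈ Finset.range l,
              ENNReal.ofReal |V (c (j + 1))| * ENNReal.ofReal ((d j)⁻¹)) *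
            ∏ j ∈ Finset.range (k - l),
              ENNReal.ofReal |V (c (k - j))| * ENNReal.ofReal ((d (k - j))⁻¹) := by
            rw [ENNReal.ofReal_mul (Finset.prod_nonneg fun _ _ =>
              mul_nonneg (abs_nonneg _) (inv_nonneg.mpr dist_nonneg)),
              ENNReal.ofReal_prod_of_nonneg (fun _ _ =>
                mul_nonneg (abs_nonneg _) (inv_nonneg.mpr dist_nonneg)),
              ENNReal.ofReal_prod_of_nonneg (fun _ _ =>
                mul_nonneg (abs_nonneg _) (inv_nonneg.mpr dist_nonneg))]
            congr 1 <;> exact Finset.prod_congr rfl fun j _ =>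
              ENNReal.ofReal_mul (abs_nonneg _)
    calc (∫⁻ y : Fin k → Stmt1Aux.E3,
        ENNReal.ofReal
          (((∏ j ∈ Finset.Icc 1 k, |V (chain k x0 xk1 y j)|) /
              ∏ j ∈ Finset.range (k + 1),
                dist (chain k x0 xk1 y j) (chain k x0 xk1 y (j + 1))) *
            ∑ l ∈ Finset.range (k + 1),
              dist (chain k x0 xk1 y l) (chain k x0 xk1 y (l + 1))))
        ≤ ∫⁻ y : Fin k → Stmt1Aux.E3, ∑ l ∈ Finset.range (k + 1),
            ((∏ j ∈ Finset.range l,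
                ENNReal.ofReal |V (chain k x0 xk1 y (j + 1))| *
                  ENNReal.ofReal ((dist (chain k x0 xk1 y j) (chain k x0 xk1 y (j + 1)))⁻¹)) *
              ∏ j ∈ Finset.range (k - l),
                ENNReal.ofReal |V (chain k x0 xk1 y (k - j))| *
                  ENNReal.ofReal ((dist (chain k x0 xk1 y (k - j)) (chain k x0 xk1 y (k - j + 1)))⁻¹)) :=
          lintegral_mono hpt
      _ = ∑ l ∈ Finset.range (k + 1), ∫⁻ y : Fin k → Stmt1Aux.E3,
            ((∏ j ∈ Finset.range l,
                ENNReal.ofReal |V (chain k x0 xk1 y (j + 1))| *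
                  ENNReal.ofReal ((dist (chain k x0 xk1 y j) (chain k x0 xk1 y (j + 1)))⁻¹)) *
              ∏ j ∈ Finset.range (k - l),
                ENNReal.ofReal |V (chain k x0 xk1 y (k - j))| *
                  ENNReal.ofReal ((dist (chain k x0 xk1 y (k - j)) (chain k x0 xk1 y (k - j + 1)))⁻¹)) :=
          lintegral_finset_sum _ (fun l _ => hAmeas l)
      _ ≤ ∑ l ∈ Finset.range (k + 1), Stmt1Aux.kato V ^ k :=
          Finset.sum_le_sum fun l hl => Stmt1Aux.split_le hV k l
            (by have := Finset.mem_range.mp hl; omega) x0 xk1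
      _ = (k + 1 : ENNReal) * Stmt1Aux.kato V ^ k := by
          rw [Finset.sum_const, Finset.card_range, nsmul_eq_mul]
          push_cast
          ring
  exact main
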